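/- Let n be a positive integer and for each ε ∈ (0, 1/(nπ)) let k(ε) ∈ (0,1) be the unique solution of √(1+k²)·K(k) = 1/(2nε). Define χ(ε) := (1−k(ε)²)²·K(k(ε)) / ((1+k(ε)²)·(2E(k(ε)) − (1−k(ε)²)·K(k(ε)))). Then χ(ε)·n·ε·exp(√2/(n·ε)) → 16√2 as ε → 0⁺; that is, χ(ε) = (16√2/(nε))·exp(−√2/(nε))·(1+o(1)), so the hypothesis χ(ε) < δ of the Hopf bifurcation theorems holds for all sufficiently small ε > 0 whenever δ > 0 is fixed. -/

import Mathlib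

open Real Filter Set
open MeasureTheory intervalIntegral

/-- The complete elliptic integral of the first kind. -/
noncomputable def Kint (k : ℝ) : ℝ :=
  ∫ s in (0:ℝ)..1, 1 / Real.sqrt ((1 - s ^ 2) * (1 - k ^ 2 * s ^ 2))

/-- The complete elliptic integral of the second kind. -/
noncomputable def Eint (k : ℝ) : ℝ :=
  ∫ s in (0:ℝ)..1, Real.sqrt ((1 - k ^ 2 * s ^ 2) / (1 - s ^ 2))

-- dominating function
lemma int_dom : IntervalIntegrable (fun s : ℝ => (1 - s) ^ (-(1/2) : ℝ)) volume 0 1 := by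
  have h := intervalIntegral.intervalIntegrable_rpow' (a := (0:ℝ)) (b := 1) (r := -(1/2)) (by norm_num)
  have h2 := h.comp_sub_left 1
  exact (by simpa using h2 : IntervalIntegrable _ volume 1 0).symm

-- generic comparison
lemma ii_of_bound {f : ℝ → ℝ} (hm : AEStronglyMeasurable f (volume.restrict (Set.uIoc (0:ℝ) 1)))
    (C : ℝ) (hb : ∀ s ∈ Set.Ioc (0:ℝ) 1, |f s| ≤ C * (1 - s) ^ (-(1/2) : ℝ) + C) :
    IntervalIntegrable f volume 0 1 := by
  have hg : IntervalIntegrable (fun s : ℝ => C * (1 - s) ^ (-(1/2) : ℝ) + C) volume 0 1 :=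
    (int_dom.const_mul C).add intervalIntegrable_const
  apply IntervalIntegrable.mono_fun hg hm
  rw [Set.uIoc_of_le (by norm_num : (0:ℝ) ≤ 1)]
  refine (ae_restrict_iff' measurableSet_Ioc).2 (Filter.Eventually.of_forall fun s hs => ?_)
  have h1 := hb s hs
  have h2 : (0:ℝ) ≤ C * (1 - s) ^ (-(1/2) : ℝ) + C := le_trans (abs_nonneg _) h1
  calc ‖f s‖ = |f s| := rfl
    _ ≤ C * (1 - s) ^ (-(1/2) : ℝ) + C := h1
    _ ≤ ‖C * (1 - s) ^ (-(1/2) : ℝ) + C‖ := le_abs_self _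

lemma inv_sqrt_rpow {x : ℝ} (hx : 0 ≤ x) : (Real.sqrt x)⁻¹ = x ^ (-(1/2) : ℝ) := by
  rw [Real.rpow_neg hx, Real.sqrt_eq_rpow]

lemma Kig_integrable {k : ℝ} (hk : k ^ 2 < 1) :
    IntervalIntegrable (fun s => 1 / Real.sqrt ((1 - s ^ 2) * (1 - k ^ 2 * s ^ 2))) volume 0 1 := by
  have hmeas : AEStronglyMeasurable (fun s : ℝ => 1 / Real.sqrt ((1 - s ^ 2) * (1 - k ^ 2 * s ^ 2)))
      (volume.restrict (Set.uIoc (0:ℝ) 1)) := by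
    apply Measurable.aestronglyMeasurable
    simp only [one_div]
    exact (((measurable_const.sub ((measurable_id' (α := ℝ)).pow_const 2)).mul
      (measurable_const.sub (((measurable_id' (α := ℝ)).pow_const 2).const_mul _))).sqrt).inv
  apply ii_of_bound hmeas (Real.sqrt (1 - k ^ 2))⁻¹
  intro s hs
  have hk0 : 0 < 1 - k ^ 2 := by linarith
  have hC : 0 < (Real.sqrt (1 - k ^ 2))⁻¹ := inv_pos.2 (Real.sqrt_pos.2 hk0)
  have habs : |1 / Real.sqrt ((1 - s ^ 2) * (1 - k ^ 2 * s ^ 2))| =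
      1 / Real.sqrt ((1 - s ^ 2) * (1 - k ^ 2 * s ^ 2)) := abs_of_nonneg (by positivity)
  rw [habs]
  have hs2 : s ^ 2 ≤ 1 := by nlinarith [hs.1.le, hs.2]
  have hks : 1 - k ^ 2 ≤ 1 - k ^ 2 * s ^ 2 := by nlinarith [mul_nonneg (sub_nonneg.2 hs2) (sq_nonneg k)]
  have h2 : 1 - k ^ 2 ≤ (1 + s) * (1 - k ^ 2 * s ^ 2) := by nlinarith [hs.1.le]
  have hprod : (1 - k ^ 2) * (1 - s) ≤ (1 - s ^ 2) * (1 - k ^ 2 * s ^ 2) := by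
    have h3 := mul_le_mul_of_nonneg_left h2 (sub_nonneg.2 hs.2)
    nlinarith [h3]
  have key : 1 / Real.sqrt ((1 - s ^ 2) * (1 - k ^ 2 * s ^ 2)) ≤
      1 / Real.sqrt ((1 - k ^ 2) * (1 - s)) := by
    rcases eq_or_lt_of_le hs.2 with h1 | h1
    · subst h1
      norm_num
    · have h0 : (0:ℝ) < (1 - k ^ 2) * (1 - s) := by nlinarith
      exact one_div_le_one_div_of_le (Real.sqrt_pos.2 h0) (Real.sqrt_le_sqrt hprod)
  have hrw : 1 / Real.sqrt ((1 - k ^ 2) * (1 - s)) =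
      (Real.sqrt (1 - k ^ 2))⁻¹ * (1 - s) ^ (-(1/2) : ℝ) := by
    rw [Real.sqrt_mul hk0.le, one_div, mul_inv, inv_sqrt_rpow (sub_nonneg.2 hs.2)]
  calc 1 / Real.sqrt ((1 - s ^ 2) * (1 - k ^ 2 * s ^ 2))
      ≤ (Real.sqrt (1 - k ^ 2))⁻¹ * (1 - s) ^ (-(1/2) : ℝ) := hrw ▸ key
    _ ≤ (Real.sqrt (1 - k ^ 2))⁻¹ * (1 - s) ^ (-(1/2) : ℝ) + (Real.sqrt (1 - k ^ 2))⁻¹ := by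
        linarith

lemma ii_generic {h : ℝ → ℝ} (hm : Measurable h) {c : ℝ} (hc : 0 < c)
    (hb : ∀ s ∈ Set.Icc (0:ℝ) 1, c ≤ h s) :
    IntervalIntegrable (fun s => 1 / Real.sqrt ((1 - s ^ 2) * h s)) volume 0 1 := by
  have hmeas : AEStronglyMeasurable (fun s : ℝ => 1 / Real.sqrt ((1 - s ^ 2) * h s))
      (volume.restrict (Set.uIoc (0:ℝ) 1)) := by
    apply Measurable.aestronglyMeasurable
    simp only [one_div]
    exact (((measurable_const.sub ((measurable_id' (α := ℝ)).pow_const 2)).mul hm).sqrt).inv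
  apply ii_of_bound hmeas (Real.sqrt c)⁻¹
  intro s hs
  have hC : 0 < (Real.sqrt c)⁻¹ := inv_pos.2 (Real.sqrt_pos.2 hc)
  have habs : |1 / Real.sqrt ((1 - s ^ 2) * h s)| = 1 / Real.sqrt ((1 - s ^ 2) * h s) :=
    abs_of_nonneg (by positivity)
  rw [habs]
  have hhs : c ≤ h s := hb s ⟨hs.1.le, hs.2⟩
  have hprod : c * (1 - s) ≤ (1 - s ^ 2) * h s := by
    have h1 : (1 - s) * c ≤ (1 - s) * ((1 + s) * h s) := by
      apply mul_le_mul_of_nonneg_left _ (sub_nonneg.2 hs.2)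
      nlinarith [hs.1.le, hc]
    nlinarith [h1]
  have key : 1 / Real.sqrt ((1 - s ^ 2) * h s) ≤ 1 / Real.sqrt (c * (1 - s)) := by
    rcases eq_or_lt_of_le hs.2 with h1 | h1
    · subst h1
      norm_num
    · have h0 : (0:ℝ) < c * (1 - s) := by nlinarith
      exact one_div_le_one_div_of_le (Real.sqrt_pos.2 h0) (Real.sqrt_le_sqrt hprod)
  have hrw : 1 / Real.sqrt (c * (1 - s)) = (Real.sqrt c)⁻¹ * (1 - s) ^ (-(1/2) : ℝ) := by
    rw [Real.sqrt_mul hc.le, one_div, mul_inv, inv_sqrt_rpow (sub_nonneg.2 hs.2)]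
  calc 1 / Real.sqrt ((1 - s ^ 2) * h s) ≤ (Real.sqrt c)⁻¹ * (1 - s) ^ (-(1/2) : ℝ) := hrw ▸ key
    _ ≤ (Real.sqrt c)⁻¹ * (1 - s) ^ (-(1/2) : ℝ) + (Real.sqrt c)⁻¹ := by linarith

lemma fS_integrable {k : ℝ} (hk : k ^ 2 < 1) :
    IntervalIntegrable (fun u => 1 / Real.sqrt ((1 - u ^ 2) * (1 - k ^ 2 + k ^ 2 * u ^ 2))) volume 0 1 := by
  apply ii_generic (by fun_prop) (c := 1 - k ^ 2) (by linarith)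
  intro s _
  nlinarith [sq_nonneg (k * s)]

lemma Kint_ge_one {k : ℝ} (hk : k ^ 2 < 1) : 1 ≤ Kint k := by
  have hne : ∀ᵐ x ∂(volume.restrict (Set.Icc (0:ℝ) 1)), x ≠ 1 := by
    apply ae_restrict_of_ae
    rw [ae_iff]
    convert Real.volume_singleton (a := 1) using 2
    ext x; simp
  have hmem : ∀ᵐ x ∂(volume.restrict (Set.Icc (0:ℝ) 1)), x ∈ Set.Icc (0:ℝ) 1 :=
    ae_restrict_mem measurableSet_Icc
  have hcalc : Kint k ≥ ∫ _ in (0:ℝ)..1, (1:ℝ) := by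
    apply intervalIntegral.integral_mono_ae_restrict (by norm_num) intervalIntegrable_const
      (Kig_integrable hk)
    filter_upwards [hne, hmem] with x hx1 hx
    have hx1' : x < 1 := lt_of_le_of_ne hx.2 hx1
    have h1 : 0 < 1 - x ^ 2 := by nlinarith [hx.1]
    have h2 : 0 < 1 - k ^ 2 * x ^ 2 := by nlinarith [sq_nonneg (k * x), sq_nonneg x, hx.1]
    have hle : (1 - x ^ 2) * (1 - k ^ 2 * x ^ 2) ≤ 1 := by nlinarith [sq_nonneg (k*x), hx.1]
    have hpos : 0 < Real.sqrt ((1 - x ^ 2) * (1 - k ^ 2 * x ^ 2)) := Real.sqrt_pos.2 (by positivity)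
    rw [le_div_iff₀ hpos, one_mul]
    exact Real.sqrt_le_one.2 hle
  simpa using hcalc

lemma Kint_mono {a b : ℝ} (ha : 0 ≤ a) (hab : a ≤ b) (hb : b ^ 2 < 1) : Kint a ≤ Kint b := by
  have ha2 : a ^ 2 < 1 := lt_of_le_of_lt (by nlinarith) hb
  apply intervalIntegral.integral_mono_on (by norm_num) (Kig_integrable ha2) (Kig_integrable hb)
  intro s hs
  rcases eq_or_lt_of_le hs.2 with h1 | h1
  · subst h1; norm_num
  · have h1s : 0 < 1 - s ^ 2 := by nlinarith [hs.1]
    have h2 : 0 < 1 - b ^ 2 * s ^ 2 := by nlinarith [sq_nonneg (b * s), sq_nonneg s, hs.1]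
    have hle : (1 - s ^ 2) * (1 - b ^ 2 * s ^ 2) ≤ (1 - s ^ 2) * (1 - a ^ 2 * s ^ 2) := by
      nlinarith [sq_nonneg s, mul_le_mul_of_nonneg_left (by nlinarith : a^2 ≤ b^2) (sq_nonneg s)]
    apply one_div_le_one_div_of_le (Real.sqrt_pos.2 (by positivity)) (Real.sqrt_le_sqrt hle)

lemma sqrt_one_sub_sq_hasDeriv {x : ℝ} (hx : x ∈ Set.Ioo (0:ℝ) 1) :
    HasDerivAt (fun y : ℝ => Real.sqrt (1 - y ^ 2)) (-x / Real.sqrt (1 - x ^ 2)) x := by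
  have h1 : 0 < 1 - x ^ 2 := by nlinarith [hx.1, hx.2]
  have h2 : HasDerivAt (fun y : ℝ => 1 - y ^ 2) (-(2 * x)) x := by
    simpa using ((hasDerivAt_pow 2 x).const_sub 1)
  have h3 := (Real.hasDerivAt_sqrt (ne_of_gt h1)).comp x h2
  refine h3.congr_deriv ?_
  field_simp

lemma sqrt_one_sub_mem {x : ℝ} (hx : x ∈ Set.Ioo (0:ℝ) 1) :
    Real.sqrt (1 - x ^ 2) ∈ Set.Ioo (0:ℝ) 1 := by
  have h1 : 0 < 1 - x ^ 2 := by nlinarith [hx.1, hx.2]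
  have h2 : 1 - x ^ 2 < 1 := by nlinarith [hx.1, hx.2]
  constructor
  · exact Real.sqrt_pos.2 h1
  · have := Real.sqrt_lt_sqrt h1.le h2
    simpa using this

lemma subst_image : (fun x : ℝ => Real.sqrt (1 - x ^ 2)) '' Set.Ioo 0 1 = Set.Ioo 0 1 := by
  ext y
  constructor
  · rintro ⟨x, hx, rfl⟩
    exact sqrt_one_sub_mem hx
  · intro hy
    have h1 : 0 < 1 - y ^ 2 := by nlinarith [hy.1, hy.2]
    refine ⟨Real.sqrt (1 - y ^ 2), sqrt_one_sub_mem hy, ?_⟩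
    simp only
    rw [Real.sq_sqrt h1.le]
    have : (1 : ℝ) - (1 - y ^ 2) = y ^ 2 := by ring
    rw [this]
    exact Real.sqrt_sq hy.1.le

lemma subst_injOn : Set.InjOn (fun x : ℝ => Real.sqrt (1 - x ^ 2)) (Set.Ioo 0 1) := by
  intro x hx y hy hxy
  simp only at hxy
  have h1 : 0 < 1 - x ^ 2 := by nlinarith [hx.1, hx.2]
  have h2 : 0 < 1 - y ^ 2 := by nlinarith [hy.1, hy.2]
  have h3 : 1 - x ^ 2 = 1 - y ^ 2 := (Real.sqrt_inj h1.le h2.le).1 hxy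
  have h4 : (x - y) * (x + y) = 0 := by nlinarith
  rcases mul_eq_zero.1 h4 with h | h
  · linarith
  · nlinarith [hx.1, hy.1]

lemma Kint_subst {k : ℝ} (hk0 : 0 < k) (hk : k ^ 2 < 1) :
    Kint k = ∫ u in (0:ℝ)..1, 1 / Real.sqrt ((1 - u ^ 2) * (1 - k ^ 2 + k ^ 2 * u ^ 2)) := by
  set g : ℝ → ℝ := fun u => 1 / Real.sqrt ((1 - u ^ 2) * (1 - k ^ 2 + k ^ 2 * u ^ 2)) with hg
  have key : ∫ u in Set.Ioo (0:ℝ) 1, g u =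
      ∫ x in Set.Ioo (0:ℝ) 1, |(-x / Real.sqrt (1 - x ^ 2))| • g (Real.sqrt (1 - x ^ 2)) := by
    conv_lhs => rw [← subst_image]
    exact integral_image_eq_integral_abs_deriv_smul measurableSet_Ioo
      (fun x hx => (sqrt_one_sub_sq_hasDeriv hx).hasDerivWithinAt) subst_injOn g
  have hcong : ∀ x ∈ Set.Ioo (0:ℝ) 1,
      |(-x / Real.sqrt (1 - x ^ 2))| • g (Real.sqrt (1 - x ^ 2)) =
      1 / Real.sqrt ((1 - x ^ 2) * (1 - k ^ 2 * x ^ 2)) := by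
    intro x hx
    have h1 : 0 < 1 - x ^ 2 := by nlinarith [hx.1, hx.2]
    have h2 : 0 < 1 - k ^ 2 * x ^ 2 := by nlinarith [sq_nonneg (k * x), hx.1, hx.2, sq_nonneg x]
    have c1 : 0 < Real.sqrt (1 - x ^ 2) := Real.sqrt_pos.2 h1
    have c2 : 0 < Real.sqrt (1 - k ^ 2 * x ^ 2) := Real.sqrt_pos.2 h2
    have habs : |(-x / Real.sqrt (1 - x ^ 2))| = x / Real.sqrt (1 - x ^ 2) := by
      rw [abs_div, abs_neg, abs_of_pos hx.1, abs_of_pos c1]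
    have harg : 1 - Real.sqrt (1 - x ^ 2) ^ 2 = x ^ 2 := by
      rw [Real.sq_sqrt h1.le]; ring
    have harg2 : 1 - k ^ 2 + k ^ 2 * Real.sqrt (1 - x ^ 2) ^ 2 = 1 - k ^ 2 * x ^ 2 := by
      rw [Real.sq_sqrt h1.le]; ring
    rw [smul_eq_mul, hg]
    simp only [harg, harg2]
    rw [Real.sqrt_mul (sq_nonneg x), Real.sqrt_sq hx.1.le,
      Real.sqrt_mul h1.le, habs]
    rw [div_mul_div_comm, div_eq_div_iff (ne_of_gt (mul_pos c1 (mul_pos hx.1 c2))) (ne_of_gt (mul_pos c1 c2))]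
    ring
  have key2 : ∫ u in Set.Ioo (0:ℝ) 1, g u =
      ∫ x in Set.Ioo (0:ℝ) 1, 1 / Real.sqrt ((1 - x ^ 2) * (1 - k ^ 2 * x ^ 2)) := by
    rw [key]
    exact setIntegral_congr_fun measurableSet_Ioo hcong
  rw [Kint, intervalIntegral.integral_of_le (by norm_num : (0:ℝ) ≤ 1),
    intervalIntegral.integral_of_le (by norm_num : (0:ℝ) ≤ 1),
    integral_Ioc_eq_integral_Ioo, integral_Ioc_eq_integral_Ioo, key2]

lemma int_A {k : ℝ} (hk0 : 0 < k) (hk : k ^ 2 < 1) :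
    ∫ u in (0:ℝ)..1, (Real.sqrt (1 - k ^ 2 + k ^ 2 * u ^ 2))⁻¹ =
      (1 / k) * Real.log ((1 + k) / Real.sqrt (1 - k ^ 2)) := by
  set c := Real.sqrt (1 - k ^ 2) with hcdef
  have hc2 : c ^ 2 = 1 - k ^ 2 := Real.sq_sqrt (by linarith)
  have hcpos : 0 < c := Real.sqrt_pos.2 (by linarith)
  have hpos : ∀ u : ℝ, 0 < 1 - k ^ 2 + k ^ 2 * u ^ 2 := fun u => by nlinarith [sq_nonneg (k * u)]
  have hderiv : ∀ u ∈ Set.uIcc (0:ℝ) 1, HasDerivAt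
      (fun u => (1 / k) * Real.arsinh (k * u / c))
      ((Real.sqrt (1 - k ^ 2 + k ^ 2 * u ^ 2))⁻¹) u := by
    intro u _
    have hinner : HasDerivAt (fun u : ℝ => k * u / c) (k / c) u := by
      simpa using ((hasDerivAt_id u).const_mul k).div_const c
    have h2 := (Real.hasDerivAt_arsinh (k * u / c)).comp u hinner
    have h3 := h2.const_mul (1 / k)
    refine h3.congr_deriv ?_
    have e1 : 1 + (k * u / c) ^ 2 = (1 - k ^ 2 + k ^ 2 * u ^ 2) / c ^ 2 := by
      rw [eq_div_iff (by positivity)]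
      field_simp
      nlinarith [hc2]
    have e2 : Real.sqrt (1 + (k * u / c) ^ 2) = Real.sqrt (1 - k ^ 2 + k ^ 2 * u ^ 2) / c := by
      rw [e1, ← Real.sqrt_sq hcpos.le, Real.sqrt_div (hpos u).le, Real.sqrt_sq hcpos.le,
        Real.sqrt_sq (Real.sqrt_nonneg _), hcdef]
    rw [e2]
    have hsp : 0 < Real.sqrt (1 - k ^ 2 + k ^ 2 * u ^ 2) := Real.sqrt_pos.2 (hpos u)
    field_simp
  have hcont : Continuous (fun u : ℝ => (Real.sqrt (1 - k ^ 2 + k ^ 2 * u ^ 2))⁻¹) := by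
    apply Continuous.inv₀
    · exact Real.continuous_sqrt.comp (by continuity)
    · exact fun u => ne_of_gt (Real.sqrt_pos.2 (hpos u))
  rw [intervalIntegral.integral_eq_sub_of_hasDerivAt hderiv (hcont.intervalIntegrable 0 1)]
  have h0 : (1 / k) * Real.arsinh (k * 0 / c) = 0 := by simp
  have h1 : k * 1 / c = k / c := by ring
  rw [h0, h1, sub_zero]
  congr 1
  rw [Real.arsinh]
  congr 1
  have e3 : 1 + (k / c) ^ 2 = 1 / c ^ 2 := by
    rw [eq_div_iff (by positivity)]
    field_simp
    nlinarith [hc2]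
  rw [e3, ← Real.sqrt_sq hcpos.le, Real.sqrt_div (by norm_num), Real.sqrt_one, Real.sqrt_sq hcpos.le]
  rw [Real.sqrt_sq hcpos.le]
  rw [← add_div, add_comm]

lemma phi_eq {u : ℝ} (hu : u ∈ Set.Ioo (0:ℝ) 1) :
    ((Real.sqrt (1 - u ^ 2))⁻¹ - 1) * u⁻¹ =
      u / (Real.sqrt (1 - u ^ 2) * (1 + Real.sqrt (1 - u ^ 2))) := by
  have h1 : 0 < 1 - u ^ 2 := by nlinarith [hu.1, hu.2]
  set c := Real.sqrt (1 - u ^ 2) with hcdef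
  have hc2 : c ^ 2 = 1 - u ^ 2 := Real.sq_sqrt h1.le
  have hcpos : 0 < c := Real.sqrt_pos.2 h1
  have h1c : (0:ℝ) < 1 + c := by linarith
  have hL : (c⁻¹ - 1) * u⁻¹ = (1 - c) / (c * u) := by
    field_simp
  rw [hL, div_eq_div_iff (ne_of_gt (mul_pos hcpos hu.1)) (ne_of_gt (mul_pos hcpos (by linarith)))]
  nlinarith [hc2]

lemma phi_bound {u : ℝ} (hu : u ∈ Set.Ioc (0:ℝ) 1) :
    |((Real.sqrt (1 - u ^ 2))⁻¹ - 1) * u⁻¹| ≤ 1 * (1 - u) ^ (-(1/2) : ℝ) + 1 := by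
  rcases eq_or_lt_of_le hu.2 with h1 | h1
  · subst h1
    rw [show (1:ℝ) - 1 = 0 by ring, Real.zero_rpow (by norm_num : (-(1/2):ℝ) ≠ 0)]
    norm_num
  · have h2 : 0 < 1 - u ^ 2 := by nlinarith [hu.1]
    set c := Real.sqrt (1 - u ^ 2) with hcdef
    have hc2 : c ^ 2 = 1 - u ^ 2 := Real.sq_sqrt h2.le
    have hcpos : 0 < c := Real.sqrt_pos.2 h2
    rw [phi_eq ⟨hu.1, h1⟩]
    have hnn : 0 ≤ u / (c * (1 + c)) := div_nonneg hu.1.le (by positivity)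
    rw [abs_of_nonneg hnn]
    have key : u / (c * (1 + c)) ≤ 1 / c := by
      rw [div_le_div_iff₀ (by positivity) hcpos]
      nlinarith [hu.2, hcpos]
    have key2 : 1 / c ≤ (1 - u) ^ (-(1/2) : ℝ) := by
      rw [← inv_sqrt_rpow (by linarith : (0:ℝ) ≤ 1 - u), one_div]
      apply inv_anti₀ (Real.sqrt_pos.2 (by linarith))
      apply Real.sqrt_le_sqrt
      nlinarith [hu.1]
    calc u / (c * (1 + c)) ≤ 1 / c := key
      _ ≤ (1 - u) ^ (-(1/2) : ℝ) := key2
      _ ≤ 1 * (1 - u) ^ (-(1/2) : ℝ) + 1 := by rw [one_mul]; norm_num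

lemma phi_integrable : IntervalIntegrable
    (fun u => ((Real.sqrt (1 - u ^ 2))⁻¹ - 1) * u⁻¹) volume 0 1 := by
  apply ii_of_bound _ 1 (fun s hs => phi_bound hs)
  apply Measurable.aestronglyMeasurable
  exact ((((measurable_const.sub ((measurable_id' (α := ℝ)).pow_const 2)).sqrt).inv.sub
    measurable_const).mul (measurable_id' (α := ℝ)).inv)

lemma phi_integral :
    ∫ u in (0:ℝ)..1, ((Real.sqrt (1 - u ^ 2))⁻¹ - 1) * u⁻¹ = Real.log 2 := by
  have hcont : ContinuousOn (fun u : ℝ => -Real.log (1 + Real.sqrt (1 - u ^ 2)))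
      (Set.Icc (0:ℝ) 1) := by
    apply ContinuousOn.neg
    apply ContinuousOn.log
    · exact (continuous_const.add (Real.continuous_sqrt.comp (by continuity))).continuousOn
    · intro x _
      have := Real.sqrt_nonneg (1 - x ^ 2)
      positivity
  have hderiv : ∀ x ∈ Set.Ioo (0:ℝ) 1, HasDerivWithinAt
      (fun u : ℝ => -Real.log (1 + Real.sqrt (1 - u ^ 2)))
      (((Real.sqrt (1 - x ^ 2))⁻¹ - 1) * x⁻¹) (Set.Ioi x) x := by
    intro x hx
    have h1 : 0 < 1 - x ^ 2 := by nlinarith [hx.1, hx.2]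
    have hcpos : 0 < Real.sqrt (1 - x ^ 2) := Real.sqrt_pos.2 h1
    have hinner : HasDerivAt (fun u : ℝ => 1 + Real.sqrt (1 - u ^ 2))
        (-x / Real.sqrt (1 - x ^ 2)) x := (sqrt_one_sub_sq_hasDeriv hx).const_add 1
    have hlog := (Real.hasDerivAt_log (by positivity : (0:ℝ) < 1 + Real.sqrt (1 - x ^ 2)).ne').comp
      x hinner
    have hneg := hlog.neg
    apply HasDerivAt.hasDerivWithinAt
    refine hneg.congr_deriv ?_
    rw [phi_eq hx]
    field_simp
  have := intervalIntegral.integral_eq_sub_of_hasDeriv_right_of_le (by norm_num : (0:ℝ) ≤ 1)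
    hcont hderiv phi_integrable
  rw [this]
  norm_num

lemma A_cont {k : ℝ} (hk : k ^ 2 < 1) :
    Continuous (fun u : ℝ => (Real.sqrt (1 - k ^ 2 + k ^ 2 * u ^ 2))⁻¹) := by
  have hpos : ∀ u : ℝ, 0 < 1 - k ^ 2 + k ^ 2 * u ^ 2 := fun u => by nlinarith [sq_nonneg (k * u)]
  apply Continuous.inv₀
  · exact Real.continuous_sqrt.comp (by continuity)
  · exact fun u => ne_of_gt (Real.sqrt_pos.2 (hpos u))

lemma psi_eq {k : ℝ} (hk : k ^ 2 < 1) (u : ℝ) :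
    ((Real.sqrt (1 - u ^ 2))⁻¹ - 1) * (Real.sqrt (1 - k ^ 2 + k ^ 2 * u ^ 2))⁻¹ =
      1 / Real.sqrt ((1 - u ^ 2) * (1 - k ^ 2 + k ^ 2 * u ^ 2)) -
      (Real.sqrt (1 - k ^ 2 + k ^ 2 * u ^ 2))⁻¹ := by
  have hpos : 0 < 1 - k ^ 2 + k ^ 2 * u ^ 2 := by nlinarith [sq_nonneg (k * u)]
  rcases le_or_gt 0 (1 - u ^ 2) with h | h
  · rw [Real.sqrt_mul h, one_div, mul_inv]
    ring
  · have h1 : Real.sqrt (1 - u ^ 2) = 0 := Real.sqrt_eq_zero_of_nonpos h.le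
    have h2 : Real.sqrt ((1 - u ^ 2) * (1 - k ^ 2 + k ^ 2 * u ^ 2)) = 0 :=
      Real.sqrt_eq_zero_of_nonpos (mul_nonpos_of_nonpos_of_nonneg h.le hpos.le)
    rw [h1, h2]
    norm_num

lemma psi_integrable {k : ℝ} (hk : k ^ 2 < 1) :
    IntervalIntegrable (fun u => ((Real.sqrt (1 - u ^ 2))⁻¹ - 1) *
      (Real.sqrt (1 - k ^ 2 + k ^ 2 * u ^ 2))⁻¹) volume 0 1 := by
  have : (fun u => ((Real.sqrt (1 - u ^ 2))⁻¹ - 1) * (Real.sqrt (1 - k ^ 2 + k ^ 2 * u ^ 2))⁻¹) =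
      fun u => 1 / Real.sqrt ((1 - u ^ 2) * (1 - k ^ 2 + k ^ 2 * u ^ 2)) -
        (Real.sqrt (1 - k ^ 2 + k ^ 2 * u ^ 2))⁻¹ := funext (psi_eq hk)
  rw [this]
  exact (fS_integrable hk).sub ((A_cont hk).intervalIntegrable 0 1)

lemma ae_ne_one : ∀ᵐ u ∂(volume : Measure ℝ), u ≠ (1:ℝ) := by
  rw [ae_iff]
  convert Real.volume_singleton (a := 1) using 2
  ext x; simp

lemma int_B_tendsto :
    Tendsto (fun k => ∫ u in (0:ℝ)..1, ((Real.sqrt (1 - u ^ 2))⁻¹ - 1) *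
      (Real.sqrt (1 - k ^ 2 + k ^ 2 * u ^ 2))⁻¹) (nhdsWithin 1 (Set.Iio 1)) (nhds (Real.log 2)) := by
  rw [← phi_integral]
  have hev : Set.Ioo (1/2 : ℝ) 1 ∈ nhdsWithin (1:ℝ) (Set.Iio 1) :=
    Ioo_mem_nhdsLT_of_mem (by norm_num : (1:ℝ) ∈ Set.Ioc (1/2 : ℝ) 1)
  apply intervalIntegral.tendsto_integral_filter_of_dominated_convergence
    (fun u => 2 * (1 - u) ^ (-(1/2) : ℝ) + 2)
  · filter_upwards [hev] with k hkmem
    apply Measurable.aestronglyMeasurable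
    exact ((((measurable_const.sub ((measurable_id' (α := ℝ)).pow_const 2)).sqrt).inv.sub
      measurable_const).mul ((measurable_const.add (((measurable_id' (α := ℝ)).pow_const 2).const_mul
      _)).sqrt.inv))
  · filter_upwards [hev] with k hkmem
    apply Filter.Eventually.of_forall
    intro u hu
    rw [Set.uIoc_of_le (by norm_num : (0:ℝ) ≤ 1)] at hu
    have hk2 : k ^ 2 < 1 := by nlinarith [hkmem.1, hkmem.2]
    have hpos : 0 < 1 - k ^ 2 + k ^ 2 * u ^ 2 := by nlinarith [sq_nonneg (k * u)]
    rcases eq_or_lt_of_le hu.2 with h1 | h1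
    · subst h1
      have : (1:ℝ) - k ^ 2 + k ^ 2 * 1 ^ 2 = 1 := by ring
      rw [show ((1:ℝ) - 1 ^ 2) = 0 by ring, this]
      simp only [Real.sqrt_zero, Real.sqrt_one, inv_zero, inv_one, mul_one, zero_sub]
      rw [show (1:ℝ) - 1 = 0 by ring, Real.zero_rpow (by norm_num : (-(1/2):ℝ) ≠ 0)]
      norm_num
    · have huo : u ∈ Set.Ioo (0:ℝ) 1 := ⟨hu.1, h1⟩
      have h2 : 0 < 1 - u ^ 2 := by nlinarith [hu.1]
      have hcpos : 0 < Real.sqrt (1 - u ^ 2) := Real.sqrt_pos.2 h2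
      have hcle : Real.sqrt (1 - u ^ 2) ≤ 1 := Real.sqrt_le_one.2 (by nlinarith [hu.1])
      have hfac : 0 ≤ (Real.sqrt (1 - u ^ 2))⁻¹ - 1 := by
        rw [sub_nonneg]
        exact (one_le_inv₀ hcpos).2 hcle
      have hhalf : u / 2 ≤ Real.sqrt (1 - k ^ 2 + k ^ 2 * u ^ 2) := by
        have : (u / 2) ^ 2 ≤ 1 - k ^ 2 + k ^ 2 * u ^ 2 := by nlinarith [hkmem.1, hu.1, hkmem.2]
        calc u / 2 = Real.sqrt ((u / 2) ^ 2) := (Real.sqrt_sq (by linarith [hu.1])).symm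
          _ ≤ _ := Real.sqrt_le_sqrt this
      have hinv : (Real.sqrt (1 - k ^ 2 + k ^ 2 * u ^ 2))⁻¹ ≤ 2 * u⁻¹ := by
        have h3 : 0 < u / 2 := by linarith [hu.1]
        calc (Real.sqrt (1 - k ^ 2 + k ^ 2 * u ^ 2))⁻¹ ≤ (u / 2)⁻¹ := inv_anti₀ h3 hhalf
          _ = 2 * u⁻¹ := by rw [div_eq_mul_inv, mul_inv, inv_inv]; ring
      have hnn : 0 ≤ ((Real.sqrt (1 - u ^ 2))⁻¹ - 1) * (Real.sqrt (1 - k ^ 2 + k ^ 2 * u ^ 2))⁻¹ :=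
        mul_nonneg hfac (inv_nonneg.2 (Real.sqrt_nonneg _))
      rw [Real.norm_eq_abs, abs_of_nonneg hnn]
      have step1 : ((Real.sqrt (1 - u ^ 2))⁻¹ - 1) * (Real.sqrt (1 - k ^ 2 + k ^ 2 * u ^ 2))⁻¹ ≤
          ((Real.sqrt (1 - u ^ 2))⁻¹ - 1) * (2 * u⁻¹) := mul_le_mul_of_nonneg_left hinv hfac
      have hphinn : 0 ≤ ((Real.sqrt (1 - u ^ 2))⁻¹ - 1) * u⁻¹ :=
        mul_nonneg hfac (inv_nonneg.2 hu.1.le)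
      have step2 := phi_bound hu
      rw [abs_of_nonneg hphinn] at step2
      calc ((Real.sqrt (1 - u ^ 2))⁻¹ - 1) * (Real.sqrt (1 - k ^ 2 + k ^ 2 * u ^ 2))⁻¹
          ≤ ((Real.sqrt (1 - u ^ 2))⁻¹ - 1) * (2 * u⁻¹) := step1
        _ = 2 * (((Real.sqrt (1 - u ^ 2))⁻¹ - 1) * u⁻¹) := by ring
        _ ≤ 2 * (1 * (1 - u) ^ (-(1/2) : ℝ) + 1) := by linarith [step2]
        _ = 2 * (1 - u) ^ (-(1/2) : ℝ) + 2 := by ring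
  · exact (int_dom.const_mul 2).add intervalIntegrable_const
  · filter_upwards [ae_ne_one] with u hu1
    intro hu
    rw [Set.uIoc_of_le (by norm_num : (0:ℝ) ≤ 1)] at hu
    have huo : u ∈ Set.Ioo (0:ℝ) 1 := ⟨hu.1, lt_of_le_of_ne hu.2 hu1⟩
    have hval : Real.sqrt (1 - 1 ^ 2 + 1 ^ 2 * u ^ 2) = u := by
      rw [show (1:ℝ) - 1 ^ 2 + 1 ^ 2 * u ^ 2 = u ^ 2 by ring]
      exact Real.sqrt_sq huo.1.le
    have hcont : ContinuousAt (fun k : ℝ => ((Real.sqrt (1 - u ^ 2))⁻¹ - 1) *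
        (Real.sqrt (1 - k ^ 2 + k ^ 2 * u ^ 2))⁻¹) 1 := by
      apply ContinuousAt.mul continuousAt_const
      apply ContinuousAt.inv₀
      · exact Real.continuous_sqrt.continuousAt.comp (by fun_prop)
      · rw [hval]; exact ne_of_gt huo.1
    have := hcont.tendsto
    rw [hval] at this
    exact this.mono_left nhdsWithin_le_nhds

lemma E_tendsto : Tendsto Eint (nhdsWithin 1 (Set.Iio 1)) (nhds 1) := by
  have key : Tendsto (fun k => ∫ s in (0:ℝ)..1, Real.sqrt ((1 - k ^ 2 * s ^ 2) / (1 - s ^ 2)))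
      (nhdsWithin 1 (Set.Iio 1)) (nhds (∫ s in (0:ℝ)..1, (1:ℝ))) := by
    apply intervalIntegral.tendsto_integral_filter_of_dominated_convergence
      (fun s => (1 - s) ^ (-(1/2) : ℝ))
    · apply Filter.Eventually.of_forall
      intro k
      apply Measurable.aestronglyMeasurable
      exact ((measurable_const.sub (((measurable_id' (α := ℝ)).pow_const 2).const_mul _)).div
        (measurable_const.sub ((measurable_id' (α := ℝ)).pow_const 2))).sqrt
    · have hev : Set.Ioo (0 : ℝ) 1 ∈ nhdsWithin (1:ℝ) (Set.Iio 1) :=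
        Ioo_mem_nhdsLT_of_mem (by norm_num : (1:ℝ) ∈ Set.Ioc (0 : ℝ) 1)
      filter_upwards [hev] with k hkmem
      apply Filter.Eventually.of_forall
      intro s hs
      rw [Set.uIoc_of_le (by norm_num : (0:ℝ) ≤ 1)] at hs
      rcases eq_or_lt_of_le hs.2 with h1 | h1
      · subst h1
        rw [show (1:ℝ) - 1 ^ 2 = 0 by ring, div_zero, Real.sqrt_zero,
          show (1:ℝ) - 1 = 0 by ring, Real.zero_rpow (by norm_num : (-(1/2):ℝ) ≠ 0)]
        simp
      · have h2 : 0 < 1 - s ^ 2 := by nlinarith [hs.1]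
        have h3 : 0 < 1 - s := by linarith
        have hle : (1 - k ^ 2 * s ^ 2) / (1 - s ^ 2) ≤ 1 / (1 - s) := by
          apply div_le_div₀ (by positivity) _ h3 (by nlinarith [hs.1])
          nlinarith [sq_nonneg (k * s)]
        have hnn : 0 ≤ Real.sqrt ((1 - k ^ 2 * s ^ 2) / (1 - s ^ 2)) := Real.sqrt_nonneg _
        rw [Real.norm_eq_abs, abs_of_nonneg hnn]
        calc Real.sqrt ((1 - k ^ 2 * s ^ 2) / (1 - s ^ 2)) ≤ Real.sqrt (1 / (1 - s)) :=
            Real.sqrt_le_sqrt hle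
          _ = (Real.sqrt (1 - s))⁻¹ := by rw [one_div, Real.sqrt_inv]
          _ = (1 - s) ^ (-(1/2) : ℝ) := inv_sqrt_rpow h3.le
    · exact int_dom
    · filter_upwards [ae_ne_one] with s hs1
      intro hs
      rw [Set.uIoc_of_le (by norm_num : (0:ℝ) ≤ 1)] at hs
      have hso : s ∈ Set.Ioo (0:ℝ) 1 := ⟨hs.1, lt_of_le_of_ne hs.2 hs1⟩
      have h2 : 0 < 1 - s ^ 2 := by nlinarith [hso.1, hso.2]
      have hcont : ContinuousAt (fun k : ℝ => Real.sqrt ((1 - k ^ 2 * s ^ 2) / (1 - s ^ 2))) 1 := by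
        apply Real.continuous_sqrt.continuousAt.comp
        exact (ContinuousAt.div (by fun_prop) continuousAt_const h2.ne')
      have hval : Real.sqrt ((1 - 1 ^ 2 * s ^ 2) / (1 - s ^ 2)) = 1 := by
        rw [show (1:ℝ) - 1 ^ 2 * s ^ 2 = 1 - s ^ 2 by ring, div_self h2.ne', Real.sqrt_one]
      have := hcont.tendsto
      rw [hval] at this
      exact this.mono_left nhdsWithin_le_nhds
  rw [show (∫ s in (0:ℝ)..1, (1:ℝ)) = 1 by simp] at key
  exact key

lemma tendsto_xlogx : Tendsto (fun t : ℝ => t * Real.log t) (nhdsWithin 0 (Set.Ioi 0)) (nhds 0) := by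
  have h := tendsto_log_mul_rpow_nhdsGT_zero one_pos
  simp only [Real.rpow_one] at h
  have : (fun t : ℝ => t * Real.log t) = fun t => Real.log t * t := by ext t; ring
  rw [this]
  exact h

lemma tendsto_one_sub_sq : Tendsto (fun x : ℝ => 1 - x ^ 2) (nhdsWithin 1 (Set.Iio 1))
    (nhdsWithin 0 (Set.Ioi 0)) := by
  rw [tendsto_nhdsWithin_iff]
  constructor
  · have : ContinuousAt (fun x : ℝ => 1 - x ^ 2) 1 := by fun_prop
    have h2 := this.tendsto
    norm_num at h2
    exact h2.mono_left nhdsWithin_le_nhds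
  · filter_upwards [Ioo_mem_nhdsLT_of_mem (by norm_num : (1:ℝ) ∈ Set.Ioc (0:ℝ) 1)] with x hx
    have : 0 < 1 - x ^ 2 := by nlinarith [hx.1, hx.2]
    exact this

lemma tendsto_xlogx_sq : Tendsto (fun x : ℝ => (1 - x ^ 2) * Real.log (1 - x ^ 2))
    (nhdsWithin 1 (Set.Iio 1)) (nhds 0) := tendsto_xlogx.comp tendsto_one_sub_sq

lemma Kdecomp {k : ℝ} (hk0 : 0 < k) (hk : k ^ 2 < 1) :
    Kint k = (∫ u in (0:ℝ)..1, ((Real.sqrt (1 - u ^ 2))⁻¹ - 1) *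
      (Real.sqrt (1 - k ^ 2 + k ^ 2 * u ^ 2))⁻¹) +
      (1 / k) * Real.log ((1 + k) / Real.sqrt (1 - k ^ 2)) := by
  rw [Kint_subst hk0 hk, ← int_A hk0 hk]
  rw [← intervalIntegral.integral_add (psi_integrable hk) ((A_cont hk).intervalIntegrable 0 1)]
  apply intervalIntegral.integral_congr
  intro u _
  show 1 / Real.sqrt ((1 - u ^ 2) * (1 - k ^ 2 + k ^ 2 * u ^ 2)) =
    ((Real.sqrt (1 - u ^ 2))⁻¹ - 1) * (Real.sqrt (1 - k ^ 2 + k ^ 2 * u ^ 2))⁻¹ +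
    (Real.sqrt (1 - k ^ 2 + k ^ 2 * u ^ 2))⁻¹
  rw [psi_eq hk u]
  ring

lemma K_asymp : Tendsto (fun k => Kint k - Real.log (4 / Real.sqrt (1 - k ^ 2)))
    (nhdsWithin 1 (Set.Iio 1)) (nhds 0) := by
  have hev : Set.Ioo (0 : ℝ) 1 ∈ nhdsWithin (1:ℝ) (Set.Iio 1) :=
    Ioo_mem_nhdsLT_of_mem (by norm_num : (1:ℝ) ∈ Set.Ioc (0 : ℝ) 1)
  have heq : ∀ k ∈ Set.Ioo (0:ℝ) 1,
      Kint k - Real.log (4 / Real.sqrt (1 - k ^ 2)) =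
      ((∫ u in (0:ℝ)..1, ((Real.sqrt (1 - u ^ 2))⁻¹ - 1) *
        (Real.sqrt (1 - k ^ 2 + k ^ 2 * u ^ 2))⁻¹) - Real.log 2) +
      (((1 / k) * Real.log (1 + k) - Real.log 2) +
        (-(1 / (2 * k * (1 + k)))) * ((1 - k ^ 2) * Real.log (1 - k ^ 2))) := by
    intro k hkm
    have hk0 : 0 < k := hkm.1
    have hk2 : k ^ 2 < 1 := by nlinarith [hkm.1, hkm.2]
    have h1k2 : 0 < 1 - k ^ 2 := by linarith
    have hcpos : 0 < Real.sqrt (1 - k ^ 2) := Real.sqrt_pos.2 h1k2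
    have h1k : (0:ℝ) < 1 + k := by linarith
    rw [Kdecomp hk0 hk2]
    have hlogc : Real.log (Real.sqrt (1 - k ^ 2)) = Real.log (1 - k ^ 2) / 2 :=
      Real.log_sqrt h1k2.le
    have hlog4 : Real.log 4 = 2 * Real.log 2 := by
      rw [show (4:ℝ) = 2 ^ 2 by norm_num, Real.log_pow]
      norm_num
    rw [Real.log_div h1k.ne' hcpos.ne', Real.log_div (by norm_num : (4:ℝ) ≠ 0) hcpos.ne',
      hlogc, hlog4]
    field_simp
    ring
  have h1 : Tendsto (fun k => (∫ u in (0:ℝ)..1, ((Real.sqrt (1 - u ^ 2))⁻¹ - 1) *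
      (Real.sqrt (1 - k ^ 2 + k ^ 2 * u ^ 2))⁻¹) - Real.log 2)
      (nhdsWithin 1 (Set.Iio 1)) (nhds 0) := by
    have := int_B_tendsto.sub (tendsto_const_nhds (x := Real.log 2))
    simpa using this
  have h2 : Tendsto (fun k : ℝ => (1 / k) * Real.log (1 + k) - Real.log 2)
      (nhdsWithin 1 (Set.Iio 1)) (nhds 0) := by
    have hc : ContinuousAt (fun k : ℝ => (1 / k) * Real.log (1 + k) - Real.log 2) 1 := by
      apply ContinuousAt.sub _ continuousAt_const
      apply ContinuousAt.mul
      · exact ContinuousAt.div continuousAt_const continuousAt_id one_ne_zero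
      · exact ContinuousAt.comp (Real.continuousAt_log (by norm_num)) (by fun_prop)
    have ht := hc.tendsto
    have h0 : (1 / (1:ℝ)) * Real.log (1 + 1) - Real.log 2 = 0 := by norm_num
    rw [h0] at ht
    exact ht.mono_left nhdsWithin_le_nhds
  have h3 : Tendsto (fun k : ℝ => (-(1 / (2 * k * (1 + k)))) *
      ((1 - k ^ 2) * Real.log (1 - k ^ 2))) (nhdsWithin 1 (Set.Iio 1)) (nhds 0) := by
    have hc : ContinuousAt (fun k : ℝ => -(1 / (2 * k * (1 + k)))) 1 := by
      apply ContinuousAt.neg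
      exact ContinuousAt.div continuousAt_const (by fun_prop) (by norm_num)
    have hprod := (hc.tendsto.mono_left nhdsWithin_le_nhds).mul tendsto_xlogx_sq
    simpa using hprod
  have hsum := h1.add (h2.add h3)
  simp only [add_zero, zero_add] at hsum
  apply Tendsto.congr' _ hsum
  filter_upwards [hev] with k hkm
  exact (heq k hkm).symm

lemma one_sub_sq_tendsto_zero : Tendsto (fun x : ℝ => 1 - x ^ 2) (nhdsWithin 1 (Set.Iio 1))
    (nhds 0) := by
  have : ContinuousAt (fun x : ℝ => 1 - x ^ 2) 1 := by fun_prop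
  have h2 := this.tendsto
  norm_num at h2
  exact h2.mono_left nhdsWithin_le_nhds

lemma Kp2_tendsto : Tendsto (fun k => (1 - k ^ 2) * Kint k) (nhdsWithin 1 (Set.Iio 1)) (nhds 0) := by
  have hev : Set.Ioo (0 : ℝ) 1 ∈ nhdsWithin (1:ℝ) (Set.Iio 1) :=
    Ioo_mem_nhdsLT_of_mem (by norm_num : (1:ℝ) ∈ Set.Ioc (0 : ℝ) 1)
  have h1 := one_sub_sq_tendsto_zero.mul K_asymp
  have h2 : Tendsto (fun k : ℝ => (1 - k ^ 2) * Real.log 4) (nhdsWithin 1 (Set.Iio 1)) (nhds 0) := by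
    have := one_sub_sq_tendsto_zero.mul (tendsto_const_nhds (x := Real.log 4))
    simpa using this
  have h3 : Tendsto (fun k : ℝ => -(1/2) * ((1 - k ^ 2) * Real.log (1 - k ^ 2)))
      (nhdsWithin 1 (Set.Iio 1)) (nhds 0) := by
    have := (tendsto_const_nhds (x := -(1/2 : ℝ))).mul tendsto_xlogx_sq
    simpa using this
  have hsum := (h1.add h2).add h3
  simp only [zero_mul, add_zero, zero_add] at hsum
  apply Tendsto.congr' _ hsum
  filter_upwards [hev] with x hx
  have hx2 : x ^ 2 < 1 := by nlinarith [hx.1, hx.2]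
  have h1x : 0 < 1 - x ^ 2 := by linarith
  have hcpos : 0 < Real.sqrt (1 - x ^ 2) := Real.sqrt_pos.2 h1x
  rw [Real.log_div (by norm_num : (4:ℝ) ≠ 0) hcpos.ne', Real.log_sqrt h1x.le]
  ring

lemma D_tendsto : Tendsto (fun k => 2 * Eint k - (1 - k ^ 2) * Kint k)
    (nhdsWithin 1 (Set.Iio 1)) (nhds 2) := by
  have := ((tendsto_const_nhds (x := (2:ℝ))).mul E_tendsto).sub Kp2_tendsto
  simpa using this

lemma sqrt_one_add_sq_tendsto : Tendsto (fun x : ℝ => Real.sqrt (1 + x ^ 2))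
    (nhdsWithin 1 (Set.Iio 1)) (nhds (Real.sqrt 2)) := by
  have : ContinuousAt (fun x : ℝ => Real.sqrt (1 + x ^ 2)) 1 :=
    Real.continuous_sqrt.continuousAt.comp (by fun_prop)
  have h2 := this.tendsto
  norm_num at h2
  exact h2.mono_left nhdsWithin_le_nhds

lemma sqrt2_sq : Real.sqrt 2 * Real.sqrt 2 = 2 := Real.mul_self_sqrt (by norm_num)

lemma P_tendsto : Tendsto (fun x => (1 - x ^ 2) ^ 2 *
    Real.exp (2 * Real.sqrt 2 * Real.sqrt (1 + x ^ 2) * Kint x))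
    (nhdsWithin 1 (Set.Iio 1)) (nhds 256) := by
  have hev : Set.Ioo (0 : ℝ) 1 ∈ nhdsWithin (1:ℝ) (Set.Iio 1) :=
    Ioo_mem_nhdsLT_of_mem (by norm_num : (1:ℝ) ∈ Set.Ioc (0 : ℝ) 1)
  -- the exponent expression
  set Ξ : ℝ → ℝ := fun x => (2 * Real.sqrt 2 * Real.sqrt (1 + x ^ 2)) *
      (Kint x - Real.log (4 / Real.sqrt (1 - x ^ 2))) +
      (2 * Real.sqrt 2 * Real.sqrt (1 + x ^ 2)) * Real.log 4 +
      (2 / (2 + Real.sqrt 2 * Real.sqrt (1 + x ^ 2))) *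
        ((1 - x ^ 2) * Real.log (1 - x ^ 2)) with hXi
  have hc : Tendsto (fun x : ℝ => 2 * Real.sqrt 2 * Real.sqrt (1 + x ^ 2))
      (nhdsWithin 1 (Set.Iio 1)) (nhds 4) := by
    have := (tendsto_const_nhds (x := 2 * Real.sqrt 2)).mul sqrt_one_add_sq_tendsto
    have h4 : 2 * Real.sqrt 2 * Real.sqrt 2 = 4 := by rw [mul_assoc, sqrt2_sq]; norm_num
    rwa [h4] at this
  have hXiLim : Tendsto Ξ (nhdsWithin 1 (Set.Iio 1)) (nhds (4 * Real.log 4)) := by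
    have h1 : Tendsto (fun x : ℝ => (2 * Real.sqrt 2 * Real.sqrt (1 + x ^ 2)) *
        (Kint x - Real.log (4 / Real.sqrt (1 - x ^ 2)))) (nhdsWithin 1 (Set.Iio 1)) (nhds 0) := by
      have := hc.mul K_asymp
      simpa using this
    have h2 : Tendsto (fun x : ℝ => (2 * Real.sqrt 2 * Real.sqrt (1 + x ^ 2)) * Real.log 4)
        (nhdsWithin 1 (Set.Iio 1)) (nhds (4 * Real.log 4)) :=
      hc.mul (tendsto_const_nhds (x := Real.log 4))
    have h3 : Tendsto (fun x : ℝ => (2 / (2 + Real.sqrt 2 * Real.sqrt (1 + x ^ 2))) *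
        ((1 - x ^ 2) * Real.log (1 - x ^ 2))) (nhdsWithin 1 (Set.Iio 1)) (nhds 0) := by
      have hden : Tendsto (fun x : ℝ => 2 + Real.sqrt 2 * Real.sqrt (1 + x ^ 2))
          (nhdsWithin 1 (Set.Iio 1)) (nhds 4) := by
        have := (tendsto_const_nhds (x := (2:ℝ))).add
          ((tendsto_const_nhds (x := Real.sqrt 2)).mul sqrt_one_add_sq_tendsto)
        rwa [sqrt2_sq, show (2:ℝ) + 2 = 4 by norm_num] at this
      have hq : Tendsto (fun x : ℝ => 2 / (2 + Real.sqrt 2 * Real.sqrt (1 + x ^ 2)))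
          (nhdsWithin 1 (Set.Iio 1)) (nhds (2 / 4)) :=
        (tendsto_const_nhds (x := (2:ℝ))).div hden (by norm_num)
      have := hq.mul tendsto_xlogx_sq
      simpa using this
    have := (h1.add h2).add h3
    simpa using this
  have hexp := (Real.continuous_exp.continuousAt.tendsto).comp hXiLim
  have hval : Real.exp (4 * Real.log 4) = 256 := by
    rw [show (4:ℝ) * Real.log 4 = Real.log (4 ^ (4:ℕ)) by rw [Real.log_pow]; push_cast; ring,
      Real.exp_log (by norm_num)]
    norm_num
  rw [hval] at hexp
  apply Tendsto.congr' _ hexp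
  filter_upwards [hev] with x hx
  have hx2 : x ^ 2 < 1 := by nlinarith [hx.1, hx.2]
  have h1x : 0 < 1 - x ^ 2 := by linarith
  have hcpos : 0 < Real.sqrt (1 - x ^ 2) := Real.sqrt_pos.2 h1x
  have hspos : 0 < Real.sqrt (1 + x ^ 2) := Real.sqrt_pos.2 (by positivity)
  have hden : 0 < 2 + Real.sqrt 2 * Real.sqrt (1 + x ^ 2) := by positivity
  have hs2 : Real.sqrt (1 + x ^ 2) ^ 2 = 1 + x ^ 2 := Real.sq_sqrt (by positivity)
  have hsq2 : Real.sqrt 2 ^ 2 = 2 := Real.sq_sqrt (by norm_num)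
  -- key: Ξ x = 2 * log (1 - x^2) + c * Kint x
  have hXieq : Ξ x = 2 * Real.log (1 - x ^ 2) +
      (2 * Real.sqrt 2 * Real.sqrt (1 + x ^ 2)) * Kint x := by
    rw [hXi]
    simp only
    rw [Real.log_div (by norm_num : (4:ℝ) ≠ 0) hcpos.ne', Real.log_sqrt h1x.le]
    have hkey : 2 / (2 + Real.sqrt 2 * Real.sqrt (1 + x ^ 2)) * (1 - x ^ 2) =
        2 - Real.sqrt 2 * Real.sqrt (1 + x ^ 2) := by
      rw [div_mul_eq_mul_div, div_eq_iff hden.ne']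
      nlinarith [hs2, hsq2]
    rw [← mul_assoc (2 / (2 + Real.sqrt 2 * Real.sqrt (1 + x ^ 2))), hkey]
    ring
  show Real.exp (Ξ x) =
    (1 - x ^ 2) ^ 2 * Real.exp (2 * Real.sqrt 2 * Real.sqrt (1 + x ^ 2) * Kint x)
  rw [hXieq, Real.exp_add]
  congr 1
  rw [show (2:ℝ) * Real.log (1 - x ^ 2) = Real.log (1 - x ^ 2) + Real.log (1 - x ^ 2) by ring,
    Real.exp_add, Real.exp_log h1x]
  ring

lemma Phi_tendsto : Tendsto (fun x : ℝ =>
    ((1 - x ^ 2) ^ 2 * Kint x / ((1 + x ^ 2) * (2 * Eint x - (1 - x ^ 2) * Kint x))) *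
      (2 * Real.sqrt (1 + x ^ 2) * Kint x)⁻¹ *
      Real.exp (2 * Real.sqrt 2 * Real.sqrt (1 + x ^ 2) * Kint x))
    (nhdsWithin 1 (Set.Iio 1)) (nhds (16 * Real.sqrt 2)) := by
  have hev : Set.Ioo (0 : ℝ) 1 ∈ nhdsWithin (1:ℝ) (Set.Iio 1) :=
    Ioo_mem_nhdsLT_of_mem (by norm_num : (1:ℝ) ∈ Set.Ioc (0 : ℝ) 1)
  have hevD : ∀ᶠ x in nhdsWithin (1:ℝ) (Set.Iio 1), 0 < 2 * Eint x - (1 - x ^ 2) * Kint x :=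
    D_tendsto.eventually (eventually_gt_nhds (by norm_num : (0:ℝ) < 2))
  -- limit of the simplified form
  have hden : Tendsto (fun x : ℝ => (1 + x ^ 2) * (2 * Eint x - (1 - x ^ 2) * Kint x) *
      (2 * Real.sqrt (1 + x ^ 2))) (nhdsWithin 1 (Set.Iio 1)) (nhds (8 * Real.sqrt 2)) := by
    have h1 : Tendsto (fun x : ℝ => 1 + x ^ 2) (nhdsWithin 1 (Set.Iio 1)) (nhds 2) := by
      have : ContinuousAt (fun x : ℝ => 1 + x ^ 2) 1 := by fun_prop
      have h2 := this.tendsto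
      norm_num at h2
      exact h2.mono_left nhdsWithin_le_nhds
    have h2 : Tendsto (fun x : ℝ => 2 * Real.sqrt (1 + x ^ 2)) (nhdsWithin 1 (Set.Iio 1))
        (nhds (2 * Real.sqrt 2)) := (tendsto_const_nhds (x := (2:ℝ))).mul sqrt_one_add_sq_tendsto
    have := (h1.mul D_tendsto).mul h2
    have e : (2:ℝ) * 2 * (2 * Real.sqrt 2) = 8 * Real.sqrt 2 := by ring
    rwa [e] at this
  have hmain := P_tendsto.mul (hden.inv₀ (by positivity))
  have hval : (256:ℝ) * (8 * Real.sqrt 2)⁻¹ = 16 * Real.sqrt 2 := by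
    rw [inv_eq_one_div, mul_one_div, div_eq_iff (by positivity : (8:ℝ) * Real.sqrt 2 ≠ 0)]
    nlinarith [sqrt2_sq]
  rw [hval] at hmain
  apply Tendsto.congr' _ hmain
  filter_upwards [hev, hevD] with x hx hD
  have hx2 : x ^ 2 < 1 := by nlinarith [hx.1, hx.2]
  have hK : 0 < Kint x := lt_of_lt_of_le one_pos (Kint_ge_one hx2)
  have hs : 0 < Real.sqrt (1 + x ^ 2) := Real.sqrt_pos.2 (by positivity)
  have h1x : (0:ℝ) < 1 + x ^ 2 := by positivity
  field_simp

theorem stmt15 (n : ℕ) (hn : 0 < n) (k : ℝ → ℝ)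
    (hk : ∀ ε ∈ Set.Ioo (0:ℝ) (1 / (n * Real.pi)),
      k ε ∈ Set.Ioo (0:ℝ) 1 ∧
      Real.sqrt (1 + (k ε) ^ 2) * Kint (k ε) = 1 / (2 * n * ε))
    (χ : ℝ → ℝ)
    (hχ : ∀ ε, χ ε = (1 - (k ε) ^ 2) ^ 2 * Kint (k ε) /
      ((1 + (k ε) ^ 2) * (2 * Eint (k ε) - (1 - (k ε) ^ 2) * Kint (k ε)))) :
    Filter.Tendsto
      (fun ε : ℝ => χ ε * n * ε * Real.exp (Real.sqrt 2 / (n * ε)))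
      (nhdsWithin 0 (Set.Ioo (0:ℝ) (1 / (n * Real.pi))))
      (nhds (16 * Real.sqrt 2)) := by
  set l := nhdsWithin (0:ℝ) (Set.Ioo (0:ℝ) (1 / (n * Real.pi))) with hl
  have hnp : (0:ℝ) < n := by exact_mod_cast hn
  have hmem : ∀ᶠ ε in l, ε ∈ Set.Ioo (0:ℝ) (1 / (n * Real.pi)) := self_mem_nhdsWithin
  -- k ε → 1 from below
  have hklt : ∀ᶠ ε in l, k ε < 1 := by
    filter_upwards [hmem] with ε hε
    exact (hk ε hε).1.2
  have hktendsto : Tendsto k l (nhds 1) := by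
    rw [tendsto_order]
    constructor
    · intro a ha
      rcases lt_or_ge a 0 with ha0 | ha0
      · filter_upwards [hmem] with ε hε
        exact lt_trans ha0 (hk ε hε).1.1
      · -- 0 ≤ a < 1
        have ha2 : a ^ 2 < 1 := by nlinarith
        have hKa : (0:ℝ) < Kint a := lt_of_lt_of_le one_pos (Kint_ge_one ha2)
        set c : ℝ := 1 / (2 * Real.sqrt 2 * n * Kint a) with hc
        have hcpos : 0 < c := by
          rw [hc]
          have h2 : (0:ℝ) < Real.sqrt 2 := Real.sqrt_pos.2 (by norm_num)
          positivity
        have hsmall : ∀ᶠ ε in l, ε < c := by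
          apply eventually_nhdsWithin_of_eventually_nhds
          exact Filter.Tendsto.eventually_lt_const hcpos tendsto_id
        filter_upwards [hmem, hsmall] with ε hε hεc
        obtain ⟨hkm, heq⟩ := hk ε hε
        have hkx2 : (k ε) ^ 2 < 1 := by nlinarith [hkm.1, hkm.2]
        have hK : (1:ℝ) ≤ Kint (k ε) := Kint_ge_one hkx2
        have hs2 : Real.sqrt (1 + (k ε) ^ 2) ≤ Real.sqrt 2 :=
          Real.sqrt_le_sqrt (by nlinarith [hkm.1, hkm.2])
        have hsq2pos : (0:ℝ) < Real.sqrt 2 := Real.sqrt_pos.2 (by norm_num)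
        have hεpos : 0 < ε := hε.1
        -- from the equation: sqrt2 * Kint (k ε) ≥ 1/(2 n ε)
        have hge : 1 / (2 * (n:ℝ) * ε) ≤ Real.sqrt 2 * Kint (k ε) := by
          rw [← heq]
          apply mul_le_mul_of_nonneg_right hs2 (by linarith)
        -- and 1/(2 n ε) > sqrt2 * Kint a since ε < c
        have hgt : Real.sqrt 2 * Kint a < 1 / (2 * (n:ℝ) * ε) := by
          rw [lt_div_iff₀ (by positivity)]
          have : ε * (2 * Real.sqrt 2 * n * Kint a) < c * (2 * Real.sqrt 2 * n * Kint a) := by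
            apply mul_lt_mul_of_pos_right hεc (by positivity)
          rw [hc] at this
          rw [one_div, inv_mul_cancel₀ (by positivity : (2 * Real.sqrt 2 * (n:ℝ) * Kint a) ≠ 0)]
            at this
          nlinarith [this]
        have hKgt : Kint a < Kint (k ε) := by
          have h1 : Real.sqrt 2 * Kint a < Real.sqrt 2 * Kint (k ε) := lt_of_lt_of_le hgt hge
          exact lt_of_mul_lt_mul_left h1 hsq2pos.le
        by_contra hcon
        push_neg at hcon
        exact absurd (Kint_mono hkm.1.le hcon ha2) (not_le.2 hKgt)
    · intro a ha
      filter_upwards [hklt] with ε hε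
      exact lt_trans hε ha
  have hkto : Tendsto k l (nhdsWithin 1 (Set.Iio 1)) := by
    rw [tendsto_nhdsWithin_iff]
    exact ⟨hktendsto, hklt⟩
  have hcomp := Phi_tendsto.comp hkto
  apply Tendsto.congr' _ hcomp
  filter_upwards [hmem] with ε hε
  obtain ⟨hkm, heq⟩ := hk ε hε
  have hkx2 : (k ε) ^ 2 < 1 := by nlinarith [hkm.1, hkm.2]
  have hK : 0 < Kint (k ε) := lt_of_lt_of_le one_pos (Kint_ge_one hkx2)
  have hs : 0 < Real.sqrt (1 + (k ε) ^ 2) := Real.sqrt_pos.2 (by positivity)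
  have hεpos : 0 < ε := hε.1
  have hne : (0:ℝ) < 2 * (n:ℝ) * ε := by positivity
  have h1 : (2 * (n:ℝ) * ε) * (Real.sqrt (1 + (k ε) ^ 2) * Kint (k ε)) = 1 := by
    rw [heq]
    field_simp
  have h2 : (2 * Real.sqrt (1 + (k ε) ^ 2) * Kint (k ε)) * ((n:ℝ) * ε) = 1 := by
    linear_combination h1
  have hinv : (n:ℝ) * ε = (2 * Real.sqrt (1 + (k ε) ^ 2) * Kint (k ε))⁻¹ :=
    eq_inv_of_mul_eq_one_left (by linear_combination h2)
  have hexp : Real.sqrt 2 / ((n:ℝ) * ε) =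
      2 * Real.sqrt 2 * Real.sqrt (1 + (k ε) ^ 2) * Kint (k ε) := by
    rw [hinv, div_eq_mul_inv, inv_inv]
    ring
  have hrw : χ ε * ↑n * ε = χ ε * (↑n * ε) := by ring
  show ((1 - (k ε) ^ 2) ^ 2 * Kint (k ε) /
      ((1 + (k ε) ^ 2) * (2 * Eint (k ε) - (1 - (k ε) ^ 2) * Kint (k ε)))) *
      (2 * Real.sqrt (1 + (k ε) ^ 2) * Kint (k ε))⁻¹ *
      Real.exp (2 * Real.sqrt 2 * Real.sqrt (1 + (k ε) ^ 2) * Kint (k ε)) =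
      χ ε * ↑n * ε * Real.exp (Real.sqrt 2 / (↑n * ε))
  rw [hexp, hrw, hinv, hχ ε]
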